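/- Let G be a (C4,C5)-free well-covered graph and x a vertex of G. Then x is codominated if and only if there exists no independent set I in G − N_G[x] such that x is an isolated vertex of G − N_G[I]. -/

import Mathlib

open SimpleGraph

variable {V : Type*}

/-- The closed neighborhood `N_G[x]` of a vertex. -/
def closedNbhd (G : SimpleGraph V) (x : V) : Set V := insert x (G.neighborSet x)

/-- `x` is codominated: some `y ≠ x` has `N_G[y] ⊆ N_G[x]`. -/
def Codominated (G : SimpleGraph V) (x : V) : Prop :=
  ∃ y, y ≠ x ∧ closedNbhd G y ⊆ closedNbhd G x

/-- `S` is an independent set of `G`. -/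
def IsIndep (G : SimpleGraph V) (S : Set V) : Prop :=
  ∀ ⦃u⦄, u ∈ S → ∀ ⦃v⦄, v ∈ S → ¬ G.Adj u v

/-- `x` is a shedding vertex of `G`: every independent set of `G - N_G[x]`
extends by a neighbor of `x`. -/
def SheddingVertex (G : SimpleGraph V) (x : V) : Prop :=
  ∀ S : Set V, S ⊆ (closedNbhd G x)ᶜ → IsIndep G S →
    ∃ v ∈ G.neighborSet x, IsIndep G (insert v S)

/-- The closed neighborhood `N_G[I]` of a set of vertices. -/
def closedNbhdSet (G : SimpleGraph V) (I : Set V) : Set V :=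
  I ∪ {v | ∃ u ∈ I, G.Adj u v}

/-- `x` is codominated in the subgraph of `G` induced on `A`. -/
def CodominatedOn (G : SimpleGraph V) (A : Finset V) (x : V) : Prop :=
  ∃ y ∈ A, y ≠ x ∧ ∀ z ∈ A, (z = y ∨ G.Adj y z) → (z = x ∨ G.Adj x z)

/-- The subgraph of `G` induced on `A` is codismantlable. -/
def CodismantlableOn (G : SimpleGraph V) [DecidableEq V] (A : Finset V) : Prop :=
  (∀ x ∈ A, ∀ y ∈ A, ¬ G.Adj x y) ∨
    ∃ x, ∃ h : x ∈ A, CodominatedOn G A x ∧ CodismantlableOn G (A.erase x)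
termination_by A.card
decreasing_by exact Finset.card_erase_lt_of_mem h

/-- `G` is codismantlable. -/
def Codismantlable (G : SimpleGraph V) [Fintype V] [DecidableEq V] : Prop :=
  CodismantlableOn G Finset.univ

/-- A maximal independent set of `G`. -/
def MaxIndep (G : SimpleGraph V) (S : Set V) : Prop :=
  IsIndep G S ∧ ∀ T : Set V, IsIndep G T → S ⊆ T → S = T

/-- `G` is well-covered: all maximal independent sets have the same size. -/
def WellCovered (G : SimpleGraph V) : Prop :=
  ∀ S T : Set V, MaxIndep G S → MaxIndep G T → S.ncard = T.ncard

/-- `G` has no induced cycle of length `n`. -/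
def CycleFree (G : SimpleGraph V) (n : ℕ) : Prop :=
  IsEmpty (cycleGraph n ↪g G)

/-- `G` is chordal: no induced cycle of length at least 4. -/
def Chordal (G : SimpleGraph V) : Prop :=
  ∀ n, 4 ≤ n → CycleFree G n

/-- `M` is a matching of `G` (as a set of edges). -/
def IsMatchingSet (G : SimpleGraph V) (M : Finset (Sym2 V)) : Prop :=
  (∀ e ∈ M, e ∈ G.edgeSet) ∧
    ∀ e ∈ M, ∀ f ∈ M, e ≠ f → ∀ v : V, v ∈ e → v ∉ f

/-- `M` is an induced matching of `G`. -/
def IsInducedMatching (G : SimpleGraph V) (M : Finset (Sym2 V)) : Prop :=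
  IsMatchingSet G M ∧
    ∀ e ∈ M, ∀ f ∈ M, e ≠ f → ∀ u : V, u ∈ e → ∀ v : V, v ∈ f → ¬ G.Adj u v

/-- The matching number `m(G)`. -/
noncomputable def matchNum (G : SimpleGraph V) : ℕ :=
  sSup {n | ∃ M : Finset (Sym2 V), IsMatchingSet G M ∧ M.card = n}

/-- The induced matching number `im(G)`. -/
noncomputable def indMatchNum (G : SimpleGraph V) : ℕ :=
  sSup {n | ∃ M : Finset (Sym2 V), IsInducedMatching G M ∧ M.card = n}

open Classical in
/-- The vertices of `A` outside the closed neighborhood of `x`. -/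
noncomputable def delNbhd (G : SimpleGraph V) [DecidableEq V] (A : Finset V) (x : V) : Finset V :=
  A.filter (fun z => ¬(z = x ∨ G.Adj x z))

/-- `x` is a shedding vertex of the subgraph of `G` induced on `A`. -/
def SheddingOn (G : SimpleGraph V) (A : Finset V) (x : V) : Prop :=
  ∀ S : Set V, S ⊆ ↑A → (∀ u ∈ S, ¬(u = x ∨ G.Adj x u)) → IsIndep G S →
    ∃ v ∈ A, G.Adj x v ∧ IsIndep G (insert v S)

lemma delNbhd_ssubset (G : SimpleGraph V) [DecidableEq V] {A : Finset V} {x : V}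
    (h : x ∈ A) : delNbhd G A x ⊂ A := by
  classical
  refine (Finset.ssubset_iff_of_subset (Finset.filter_subset _ _)).mpr ⟨x, h, ?_⟩
  simp [delNbhd]

/-- The subgraph of `G` induced on `A` is vertex decomposable. -/
noncomputable def VertexDecomposableOn (G : SimpleGraph V) [DecidableEq V] (A : Finset V) :
    Prop :=
  (∀ x ∈ A, ∀ y ∈ A, ¬ G.Adj x y) ∨
    ∃ x, ∃ h : x ∈ A, SheddingOn G A x ∧ VertexDecomposableOn G (A.erase x) ∧
      VertexDecomposableOn G (delNbhd G A x)
termination_by A.card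
decreasing_by
  · exact Finset.card_erase_lt_of_mem h
  · exact Finset.card_lt_card (delNbhd_ssubset G h)

/-- `G` is vertex decomposable. -/
noncomputable def VertexDecomposable (G : SimpleGraph V) [Fintype V] [DecidableEq V] : Prop :=
  VertexDecomposableOn G Finset.univ

/-- The restriction of `G` to `A` codismantles to its restriction to `B`. -/
inductive CodisTo (G : SimpleGraph V) [DecidableEq V] : Finset V → Finset V → Prop
  | refl (A : Finset V) : CodisTo G A A
  | step {A B : Finset V} {x : V} (h : x ∈ A) (hc : CodominatedOn G A x)
      (ht : CodisTo G (A.erase x) B) : CodisTo G A B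

/-- `L` is a codismantling sequence for the subgraph of `G` induced on `A`. -/
def CodisSeq (G : SimpleGraph V) [DecidableEq V] : Finset V → List V → Prop
  | A, [] => ∀ x ∈ A, ∀ y ∈ A, ¬ G.Adj x y
  | A, x :: xs => x ∈ A ∧ CodominatedOn G A x ∧ CodisSeq G (A.erase x) xs

/-- `C` is a vertex cover of `G`. -/
def IsVertexCover (G : SimpleGraph V) (C : Set V) : Prop :=
  ∀ ⦃u v : V⦄, G.Adj u v → u ∈ C ∨ v ∈ C

/-- The co-chordal cover number: the minimum number of co-chordal subgraphs of `G`
covering all edges of `G`. -/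
noncomputable def cochord (G : SimpleGraph V) : ℕ :=
  sInf {k | ∃ H : Fin k → G.Subgraph, (∀ i, Chordal ((H i).coeᶜ)) ∧
    ∀ e ∈ G.edgeSet, ∃ i, e ∈ (H i).edgeSet}

/-- The domination number of a graph. -/
noncomputable def domNum {W : Type*} (K : SimpleGraph W) : ℕ :=
  sInf {n | ∃ D : Finset W, (∀ v : W, v ∈ D ∨ ∃ u ∈ D, K.Adj u v) ∧ D.card = n}


lemma not_c4free (G : SimpleGraph V) {a b c d : V}
    (hab : G.Adj a b) (hbc : G.Adj b c) (hcd : G.Adj c d) (hda : G.Adj d a)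
    (hac : ¬ G.Adj a c) (hbd : ¬ G.Adj b d)
    (hac' : a ≠ c) (hbd' : b ≠ d) : ¬ CycleFree G 4 := by
  intro h
  have hca : ¬ G.Adj c a := fun h' => hac h'.symm
  have hdb : ¬ G.Adj d b := fun h' => hbd h'.symm
  have h1 := hab.ne; have h2 := hbc.ne; have h3 := hcd.ne; have h4 := hda.ne
  refine h.elim ⟨⟨![a,b,c,d], ?_⟩, ?_⟩
  · intro i j hij
    fin_cases i <;> fin_cases j <;> simp_all
  · intro i j
    show G.Adj (![a,b,c,d] i) (![a,b,c,d] j) ↔ _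
    fin_cases i <;> fin_cases j <;>
      simp [Function.Embedding.coeFn_mk, cycleGraph_adj, hab, hbc, hcd, hda, hac, hbd, hca, hdb,
        hab.symm, hbc.symm, hcd.symm, hda.symm] <;> decide

lemma not_c5free (G : SimpleGraph V) {a b c d e : V}
    (hab : G.Adj a b) (hbc : G.Adj b c) (hcd : G.Adj c d) (hde : G.Adj d e)
    (hea : G.Adj e a)
    (hac : ¬ G.Adj a c) (had : ¬ G.Adj a d) (hbd : ¬ G.Adj b d)
    (hbe : ¬ G.Adj b e) (hce : ¬ G.Adj c e)
    (hac' : a ≠ c) (had' : a ≠ d) (hbd' : b ≠ d) (hbe' : b ≠ e) (hce' : c ≠ e) :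
    ¬ CycleFree G 5 := by
  intro h
  have hca : ¬ G.Adj c a := fun h' => hac h'.symm
  have hda : ¬ G.Adj d a := fun h' => had h'.symm
  have hdb : ¬ G.Adj d b := fun h' => hbd h'.symm
  have heb : ¬ G.Adj e b := fun h' => hbe h'.symm
  have hec : ¬ G.Adj e c := fun h' => hce h'.symm
  have h1 := hab.ne; have h2 := hbc.ne; have h3 := hcd.ne; have h4 := hde.ne
  have h5 := hea.ne
  refine h.elim ⟨⟨![a,b,c,d,e], ?_⟩, ?_⟩
  · intro i j hij
    fin_cases i <;> fin_cases j <;> simp_all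
  · intro i j
    show G.Adj (![a,b,c,d,e] i) (![a,b,c,d,e] j) ↔ _
    fin_cases i <;> fin_cases j <;>
      simp [Function.Embedding.coeFn_mk, cycleGraph_adj, hab, hbc, hcd, hde, hea, hac, had, hbd, hbe, hce,
        hca, hda, hdb, heb, hec,
        hab.symm, hbc.symm, hcd.symm, hde.symm, hea.symm] <;> decide

lemma notMemClosedNbhd {G : SimpleGraph V} {x a : V} (h : a ∉ closedNbhd G x) :
    a ≠ x ∧ ¬ G.Adj x a :=
  ⟨fun he => h (he ▸ Set.mem_insert _ _), fun he => h (Set.mem_insert_of_mem _ he)⟩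

/-- in a `(C4,C5)`-free well-covered graph, `x` is codominated iff
there is no independent set `I` of `G - N[x]` such that `x` is isolated in
`G - N[I]`. -/
theorem codominated_iff_no_isolating_indep [Fintype V] (G : SimpleGraph V)
    (h4 : CycleFree G 4) (h5 : CycleFree G 5) (hwc : WellCovered G) (x : V) :
    Codominated G x ↔
      ¬ ∃ I : Set V, I ⊆ (closedNbhd G x)ᶜ ∧ IsIndep G I ∧
        x ∉ closedNbhdSet G I ∧ ∀ v ∉ closedNbhdSet G I, ¬ G.Adj x v := by
  classical
  constructor
  · rintro ⟨y, hyx, hy⟩ ⟨I, hIsub, hIind, hxI, hiso⟩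
    have hyNx : y ∈ closedNbhd G x := hy (Set.mem_insert y _)
    have hyadj : G.Adj x y := by
      rcases Set.mem_insert_iff.mp hyNx with h | h
      · exact absurd h hyx
      · exact h
    have hyNI : y ∈ closedNbhdSet G I := by
      by_contra h
      exact hiso y h hyadj
    rcases hyNI with hyI | ⟨u, huI, huy⟩
    · exact hIsub hyI hyNx
    · exact hIsub huI (hy (Set.mem_insert_of_mem _ huy.symm))
  · intro hno
    by_contra hnc
    push_neg at hno
    set D : Finset V → Finset V :=
      fun S => Finset.univ.filter (fun w => G.Adj x w ∧ ∃ u ∈ S, G.Adj u w) with hD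
    set P : Finset V → Prop :=
      fun S => (↑S : Set V) ⊆ (closedNbhd G x)ᶜ ∧ IsIndep G (↑S : Set V) with hP
    have hxnotin : ∀ S : Finset V, P S → x ∉ closedNbhdSet G ↑S := by
      rintro S hS (hx | ⟨u, huS, hux⟩)
      · exact hS.1 hx (Set.mem_insert _ _)
      · exact hS.1 huS (Set.mem_insert_of_mem _ hux.symm)
    have hgood : ∀ S : Finset V, P S →
        ∃ v, v ∉ closedNbhdSet G (↑S : Set V) ∧ G.Adj x v := by
      intro S hS
      exact hno ↑S hS.1 hS.2 (hxnotin S hS)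
    have hne : ((Finset.univ : Finset (Finset V)).filter P).Nonempty := by
      refine ⟨∅, ?_⟩
      simp only [Finset.mem_filter, Finset.mem_univ, true_and, hP]
      constructor
      · simp
      · intro u hu
        simp at hu
    obtain ⟨S, hSmem, hmax⟩ :=
      ((Finset.univ : Finset (Finset V)).filter P).exists_max_image
        (fun S => (D S).card) hne
    have hS : P S := (Finset.mem_filter.mp hSmem).2
    obtain ⟨v, hvS, hxv⟩ := hgood S hS
    have hvx : v ≠ x := hxv.ne'
    obtain ⟨z, hzv, hzx⟩ := Set.not_subset.mp (fun hsub => hnc ⟨v, hvx, hsub⟩)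
    have hzx' := notMemClosedNbhd hzx
    have hvz : G.Adj v z := by
      rcases Set.mem_insert_iff.mp hzv with h | h
      · exact absurd (h ▸ (Set.mem_insert_of_mem x hxv : v ∈ closedNbhd G x)) hzx
      · exact h
    have hzS : z ∉ S := fun hz => hvS (Or.inr ⟨z, hz, hvz.symm⟩)
    set S' : Finset V := insert z (S.filter (fun s => ¬ G.Adj z s)) with hS'def
    have hS'P : P S' := by
      constructor
      · intro a ha
        simp only [hS'def, Finset.coe_insert, Set.mem_insert_iff, Finset.coe_filter,
          Set.mem_setOf_eq] at ha
        rcases ha with rfl | ⟨haS, _⟩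
        · exact hzx
        · exact hS.1 haS
      · intro a ha b hb
        simp only [hS'def, Finset.coe_insert, Set.mem_insert_iff, Finset.coe_filter,
          Set.mem_setOf_eq] at ha hb
        rcases ha with rfl | ⟨haS, haz⟩ <;> rcases hb with rfl | ⟨hbS, hbz⟩
        · exact G.irrefl
        · exact hbz
        · exact fun h => haz h.symm
        · exact hS.2 haS hbS
    have hS'mem : S' ∈ (Finset.univ : Finset (Finset V)).filter P :=
      Finset.mem_filter.mpr ⟨Finset.mem_univ _, hS'P⟩
    have hcard := hmax S' hS'mem
    have hvD' : v ∈ D S' := by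
      simp only [hD, Finset.mem_filter, Finset.mem_univ, true_and]
      exact ⟨hxv, z, Finset.mem_insert_self _ _, hvz.symm⟩
    have hvD : v ∉ D S := by
      simp only [hD, Finset.mem_filter, Finset.mem_univ, true_and, not_and]
      rintro - ⟨u, huS, huv⟩
      exact hvS (Or.inr ⟨u, huS, huv⟩)
    obtain ⟨w, hwD, hwD'⟩ : ∃ w ∈ D S, w ∉ D S' := by
      by_contra hcon
      push_neg at hcon
      have hsub : insert v (D S) ⊆ D S' := Finset.insert_subset hvD' hcon
      have hle := Finset.card_le_card hsub
      rw [Finset.card_insert_of_notMem hvD] at hle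
      exact Nat.not_succ_le_self _ (hle.trans hcard)
    simp only [hD, Finset.mem_filter, Finset.mem_univ, true_and] at hwD hwD'
    obtain ⟨hxw, s, hsS, hsw⟩ := hwD
    push_neg at hwD'
    have hwS' : ∀ u ∈ S', ¬ G.Adj u w := hwD' hxw
    have hzw : ¬ G.Adj z w := hwS' z (Finset.mem_insert_self _ _)
    have hzs : G.Adj z s := by
      by_contra h
      exact hwS' s (Finset.mem_insert_of_mem (Finset.mem_filter.mpr ⟨hsS, h⟩)) hsw
    have hsx' := notMemClosedNbhd (hS.1 hsS)
    have hvs : ¬ G.Adj v s := fun h => hvS (Or.inr ⟨s, hsS, h.symm⟩)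
    have hvw : v ≠ w := fun h => hvD (by
      simp only [hD, Finset.mem_filter, Finset.mem_univ, true_and]
      exact ⟨h ▸ hxw, s, hsS, h ▸ hsw⟩)
    have hvNx : v ∈ closedNbhd G x := Set.mem_insert_of_mem _ hxv
    have hwNx : w ∈ closedNbhd G x := Set.mem_insert_of_mem _ hxw
    have hvz' : v ≠ z := fun h => hzx (h ▸ hvNx)
    have hvs' : v ≠ s := fun h => (hS.1 hsS) (h ▸ hvNx)
    have hzw' : z ≠ w := fun h => hzx (h ▸ hwNx)
    have hxz : ¬ G.Adj x z := hzx'.2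
    have hxs : ¬ G.Adj x s := hsx'.2
    by_cases hadjvw : G.Adj v w
    · exact not_c4free G hvz hzs hsw hadjvw.symm hvs hzw hvs' hzw' h4
    · exact not_c5free G hxv hvz hzs hsw hxw.symm
        hxz hxs hvs hadjvw hzw
        (Ne.symm hzx'.1) (Ne.symm hsx'.1) hvs' hvw hzw' h5
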